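/- For all t > 0 with t ≠ 1, the derivative F1'(t) = ((t^2+1)/(2t^2))·ln|(t+1)/(t-1)| - 1/t is strictly positive. -/

import Mathlib

noncomputable def F1' (t : ℝ) : ℝ :=
  ((t^2 + 1)/(2*t^2)) * Real.log |(t+1)/(t-1)| - 1/t

lemma key_log_ineq (u : ℝ) (h0 : 0 < u) (h1 : u < 1) :
    2*u < Real.log ((1+u)/(1-u)) := by
  set f : ℝ → ℝ := fun x => Real.log (1+x) - Real.log (1-x) - 2*x with hf
  have hder : ∀ x ∈ Set.Ioo (-1:ℝ) 1, HasDerivAt f (2*x^2/((1+x)*(1-x))) x := by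
    intro x hx
    have h1x : (0:ℝ) < 1+x := by linarith [hx.1]
    have h2x : (0:ℝ) < 1-x := by linarith [hx.2]
    have d1 : HasDerivAt (fun x : ℝ => Real.log (1+x)) (1/(1+x)) x := by
      have := (Real.hasDerivAt_log h1x.ne').comp x ((hasDerivAt_id x).const_add 1)
      simpa [one_div, Function.comp_def] using this
    have d2 : HasDerivAt (fun x : ℝ => Real.log (1-x)) (-(1/(1-x))) x := by
      have := (Real.hasDerivAt_log h2x.ne').comp x ((hasDerivAt_id x).const_sub 1)
      simpa [one_div, Function.comp_def] using this
    have d3 : HasDerivAt (fun x : ℝ => 2*x) 2 x := by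
      simpa using (hasDerivAt_id x).const_mul 2
    have hD := (d1.sub d2).sub d3
    refine hD.congr_deriv ?_
    field_simp
    ring
  have hmono : StrictMonoOn f (Set.Icc 0 u) := by
    apply strictMonoOn_of_deriv_pos (convex_Icc 0 u)
    · intro x hx
      have hx' : x ∈ Set.Ioo (-1:ℝ) 1 := ⟨by linarith [hx.1], by linarith [hx.2]⟩
      exact (hder x hx').continuousAt.continuousWithinAt
    · intro x hx
      rw [interior_Icc] at hx
      have hx' : x ∈ Set.Ioo (-1:ℝ) 1 := ⟨by linarith [hx.1], by linarith [hx.2]⟩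
      rw [(hder x hx').deriv]
      have h1x : (0:ℝ) < 1+x := by linarith [hx'.1]
      have h2x : (0:ℝ) < 1-x := by linarith [hx'.2]
      have hxpos : 0 < x := hx.1
      positivity
  have h0mem : (0:ℝ) ∈ Set.Icc (0:ℝ) u := ⟨le_refl 0, h0.le⟩
  have humem : u ∈ Set.Icc (0:ℝ) u := ⟨h0.le, le_refl u⟩
  have := hmono h0mem humem h0
  have hf0 : f 0 = 0 := by simp [hf]
  have hfu : f u = Real.log (1+u) - Real.log (1-u) - 2*u := rfl
  rw [hf0, hfu] at this
  have hlog : Real.log ((1+u)/(1-u)) = Real.log (1+u) - Real.log (1-u) :=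
    Real.log_div (by linarith) (by linarith)
  linarith

theorem stmt_2 (t : ℝ) (ht : 0 < t) (ht1 : t ≠ 1) : 0 < F1' t := by
  unfold F1'
  rcases lt_or_gt_of_ne ht1 with hlt | hgt
  · -- 0 < t < 1
    have key := key_log_ineq t ht hlt
    have habs : |(t+1)/(t-1)| = (1+t)/(1-t) := by
      rw [abs_of_neg (div_neg_of_pos_of_neg (by linarith) (by linarith)), ← neg_div,
        div_eq_div_iff (by intro h; apply ht1; linarith : t-1 ≠ 0)
          (by intro h; apply ht1; linarith : 1-t ≠ 0)]
      ring
    rw [habs]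
    have cpos : 0 < (t^2+1)/(2*t^2) := by positivity
    have h2 : (t^2+1)/(2*t^2) * (2*t) < (t^2+1)/(2*t^2) * Real.log ((1+t)/(1-t)) :=
      mul_lt_mul_of_pos_left key cpos
    have h1 : (t^2+1)/(2*t^2) * (2*t) - 1/t = t := by
      field_simp
      ring
    linarith
  · -- t > 1
    have h0u : 0 < 1/t := by positivity
    have h1u : 1/t < 1 := by rw [div_lt_one ht]; linarith
    have key := key_log_ineq (1/t) h0u h1u
    have habs : |(t+1)/(t-1)| = (1+1/t)/(1-1/t) := by
      rw [abs_of_pos (div_pos (by linarith) (by linarith))]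
      rw [div_eq_div_iff (by linarith) (by
        have : (0:ℝ) < 1 - 1/t := by linarith
        linarith)]
      field_simp
    rw [habs]
    have cpos : 0 < (t^2+1)/(2*t^2) := by positivity
    have h2 : (t^2+1)/(2*t^2) * (2*(1/t)) < (t^2+1)/(2*t^2) * Real.log ((1+1/t)/(1-1/t)) :=
      mul_lt_mul_of_pos_left key cpos
    have h1 : (t^2+1)/(2*t^2) * (2*(1/t)) - 1/t = 1/t^3 := by
      field_simp
      ring
    have : (0:ℝ) < 1/t^3 := by positivity
    linarith
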